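/- For σ, w ∈ S_n, the set I(σ)w = {uw : u ∈ S_n, u ≤ σ} has a unique maximal element with respect to the Bruhat order, and max(I(σ)w) = σ * w, where * is the Demazure product. -/

import Mathlib

open scoped Classical

namespace KK

/-- The simple transposition `s_j = (j, j+1)` in `S_n` (1-indexed letters `1 ≤ j ≤ n-1`);
junk value `1` out of range. -/
def simpleRefl (n : ℕ) (j : ℕ) : Equiv.Perm (Fin n) :=
  if h : 1 ≤ j ∧ j ≤ n - 1 then
    Equiv.swap ⟨j - 1, by omega⟩ ⟨j, by omega⟩
  else 1

/-- The permutation represented by a word in the simple transpositions. -/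
def wordProd (n : ℕ) (l : List ℕ) : Equiv.Perm (Fin n) :=
  (l.map (simpleRefl n)).prod

/-- Coxeter length: minimal length of a word in simple transpositions representing `w`. -/
noncomputable def len (n : ℕ) (w : Equiv.Perm (Fin n)) : ℕ :=
  sInf {k | ∃ l : List ℕ, (∀ j ∈ l, 1 ≤ j ∧ j ≤ n - 1) ∧ l.length = k ∧ wordProd n l = w}

/-- A word is reduced if its letters are genuine simple-transposition indices and its
length equals the Coxeter length of the permutation it represents. -/
def IsReduced (n : ℕ) (l : List ℕ) : Prop :=
  (∀ j ∈ l, 1 ≤ j ∧ j ≤ n - 1) ∧ len n (wordProd n l) = l.length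

/-- Bruhat order on `S_n`: `u ≤ w` iff some reduced word for `w` contains a reduced word
for `u` as a subword. -/
def bruhatLE (n : ℕ) (u w : Equiv.Perm (Fin n)) : Prop :=
  ∃ l l' : List ℕ, IsReduced n l ∧ wordProd n l = w ∧
    l'.Sublist l ∧ IsReduced n l' ∧ wordProd n l' = u

/-- `m` is the greatest element of `K` in the Bruhat order (hence the unique maximal one). -/
def IsBruhatGreatest (n : ℕ) (K : Set (Equiv.Perm (Fin n))) (m : Equiv.Perm (Fin n)) : Prop :=
  m ∈ K ∧ ∀ u ∈ K, bruhatLE n u m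

/-- `m` is the least element of `K` in the Bruhat order (hence the unique minimal one). -/
def IsBruhatLeast (n : ℕ) (K : Set (Equiv.Perm (Fin n))) (m : Equiv.Perm (Fin n)) : Prop :=
  m ∈ K ∧ ∀ u ∈ K, bruhatLE n m u

/-- One step of the Demazure product: `w * s_j = max {w, w s_j}` in the Bruhat order. -/
noncomputable def demStep (n : ℕ) (w : Equiv.Perm (Fin n)) (j : ℕ) : Equiv.Perm (Fin n) :=
  if len n w < len n (w * simpleRefl n j) then w * simpleRefl n j else w

/-- The Demazure product `*(w)` of a (not necessarily reduced) word. -/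
noncomputable def demProd (n : ℕ) (l : List ℕ) : Equiv.Perm (Fin n) :=
  l.foldl (demStep n) 1

/-- The binary Demazure product of two permutations, `w * w' = max I(w)I(w')`. -/
noncomputable def demMul (n : ℕ) (w w' : Equiv.Perm (Fin n)) : Equiv.Perm (Fin n) :=
  if h : ∃ m, IsBruhatGreatest n
      {x | ∃ u v, bruhatLE n u w ∧ bruhatLE n v w' ∧ x = u * v} m
  then h.choose else 1

/-- The longest element `w₀` of `S_n`. -/
def w0 (n : ℕ) : Equiv.Perm (Fin n) := Fin.revPerm



/-- `μ` is a partition with `n` nonnegative integer parts `μ 1 ≥ ⋯ ≥ μ n ≥ 0`. -/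
def IsPartition (n : ℕ) (μ : ℕ → ℤ) : Prop :=
  (∀ i, 1 ≤ i → i < n → μ (i + 1) ≤ μ i) ∧ 0 ≤ μ n

/-- `(i, j)` indexes an entry strictly below the top in the triangular array:
`n ≥ i > j ≥ 1`. -/
def inTriangle (n : ℕ) (p : ℕ × ℕ) : Prop := 1 ≤ p.2 ∧ p.2 < p.1 ∧ p.1 ≤ n

/-- A Gelfand–Tsetlin pattern of size `n`, encoded as a function `a : ℕ → ℕ → ℝ`
(value `a i j` for `n ≥ i ≥ j ≥ 1`, and `0` outside the triangle). -/
def IsGTArray (n : ℕ) (a : ℕ → ℕ → ℝ) : Prop :=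
  (∀ i j, 1 ≤ j → j < i → i ≤ n →
      0 ≤ a i j - a (i - 1) j ∧ 0 ≤ a (i - 1) j - a i (j + 1)) ∧
  (∀ i j, j = 0 ∨ i < j ∨ n < i → a i j = 0)

/-- The Gelfand–Tsetlin polytope `GT(μ)`: GT patterns of size `n` with bottom row `μ`. -/
def GTset (n : ℕ) (μ : ℕ → ℤ) : Set (ℕ → ℕ → ℝ) :=
  {a | IsGTArray n a ∧ ∀ j, 1 ≤ j → j ≤ n → a n j = (μ j : ℝ)}

/-- The integral points `GT_ℤ(μ)` of the Gelfand–Tsetlin polytope. -/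
def GTZ (n : ℕ) (μ : ℕ → ℤ) : Set (ℕ → ℕ → ℝ) :=
  {a ∈ GTset n μ | ∀ i j, ∃ m : ℤ, a i j = (m : ℝ)}

/-- The weight of a GT pattern: `wt a i = Σ_{j=1}^i a i j − Σ_{j=1}^{i-1} a (i-1) j`. -/
noncomputable def wt (a : ℕ → ℕ → ℝ) (i : ℕ) : ℝ :=
  (∑ j ∈ Finset.Icc 1 i, a i j) - ∑ j ∈ Finset.Icc 1 (i - 1), a (i - 1) j

/-- The pairs `(i,j)` with `n ≥ i > j ≥ 1` in increasing lexicographic order. -/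
def pairsLex (n : ℕ) : List (ℕ × ℕ) :=
  (List.range' 2 (n - 1)).flatMap fun i => (List.range' 1 (i - 1)).map fun j => (i, j)

/-- The pairs `(i,j)` with `n ≥ i > j ≥ 1` in increasing order for the total order in
which `(i,j)` precedes `(i',j')` iff `i < i'`, or `i = i'` and `j > j'`. -/
def pairsBar (n : ℕ) : List (ℕ × ℕ) :=
  (List.range' 2 (n - 1)).flatMap fun i => ((List.range' 1 (i - 1)).reverse).map fun j => (i, j)

/-- The pairs `(i,j)` with `n ≥ i > j ≥ 1` in decreasing order for the total order in
which `(i,j)` precedes `(i',j')` iff `i < i'`, or `i = i'` and `j > j'`: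
`i` descending and, within each `i`, `j` ascending. -/
def pairsFin (n : ℕ) : List (ℕ × ℕ) :=
  ((List.range' 2 (n - 1)).reverse).flatMap fun i => (List.range' 1 (i - 1)).map fun j => (i, j)

/-- The word `𝔣(P)`: list the pairs `(i,j)` with `a (i-1) j = a i (j+1)` in the order of
`pairsFin` and record the letter `j` for each. -/
noncomputable def fWord (n : ℕ) (a : ℕ → ℕ → ℝ) : List ℕ :=
  ((pairsFin n).filter fun p => a (p.1 - 1) p.2 = a p.1 (p.2 + 1)).map fun p => p.2

/-- The word `𝔦(Q)`: list the pairs `(i,j)` with `b i j = b (i-1) j` in increasing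
lexicographic order and record the letter `i - j` for each. -/
noncomputable def iWord (n : ℕ) (b : ℕ → ℕ → ℝ) : List ℕ :=
  ((pairsLex n).filter fun p => b p.1 p.2 = b (p.1 - 1) p.2).map fun p => p.1 - p.2



/-- The sequence `d_t`, `1 ≤ t ≤ i+1`, used to define the crystal operators `e_i, f_i`
(with the convention `a_{k,k+1} = 0` for `k ∈ {i-1, i}`). -/
noncomputable def dseq (a : ℕ → ℕ → ℝ) (i : ℕ) : ℕ → ℝ
  | 0 => 0
  | 1 => a i 1 - a (i + 1) 1
  | (t + 2) => dseq a i (t + 1) + a i (t + 1) + (if t + 2 = i + 1 then 0 else a i (t + 2))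
      - (if t + 1 = i then 0 else a (i - 1) (t + 1)) - a (i + 1) (t + 2)

/-- `d = min {d_1, …, d_{i+1}}`. -/
noncomputable def dmin (a : ℕ → ℕ → ℝ) (i : ℕ) : ℝ :=
  ((Finset.Icc 1 (i + 1)).image (dseq a i)).min'
    (Finset.Nonempty.image ⟨1, by simp⟩ _)

/-- `m`: the smallest index `t ∈ [1, i+1]` with `d_t = d`. -/
noncomputable def mIdx (a : ℕ → ℕ → ℝ) (i : ℕ) : ℕ :=
  sInf {t | t ∈ Finset.Icc 1 (i + 1) ∧ dseq a i t = dmin a i}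

/-- `M`: the largest index `t ∈ [1, i+1]` with `d_t = d`. -/
noncomputable def MIdx (a : ℕ → ℕ → ℝ) (i : ℕ) : ℕ :=
  sSup {t | t ∈ Finset.Icc 1 (i + 1) ∧ dseq a i t = dmin a i}

/-- The raising crystal operator `e_i` (`none` plays the role of `0`). -/
noncomputable def eOp (i : ℕ) (a : ℕ → ℕ → ℝ) : Option (ℕ → ℕ → ℝ) :=
  if dmin a i = 0 then none
  else some fun i' j' => if i' = i ∧ j' = mIdx a i then a i' j' + 1 else a i' j'

/-- The lowering crystal operator `f_i` (`none` plays the role of `0`). -/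
noncomputable def fOp (i : ℕ) (a : ℕ → ℕ → ℝ) : Option (ℕ → ℕ → ℝ) :=
  if MIdx a i = i + 1 then none
  else some fun i' j' => if i' = i ∧ j' = MIdx a i then a i' j' - 1 else a i' j'

/-- `m`-fold iteration of a partial operator. -/
noncomputable def iterOp (op : (ℕ → ℕ → ℝ) → Option (ℕ → ℕ → ℝ)) :
    ℕ → (ℕ → ℕ → ℝ) → Option (ℕ → ℕ → ℝ)
  | 0 => fun x => some x
  | (m + 1) => fun x => (op x).bind (iterOp op m)

/-- Apply `op i₁ ^ m₁ ∘ ⋯ ∘ op i_k ^ m_k` to `x`, given the list `[(i₁,m₁),…,(i_k,m_k)]`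
(the last pair acts first). -/
noncomputable def applyWord (op : ℕ → (ℕ → ℕ → ℝ) → Option (ℕ → ℕ → ℝ)) :
    List (ℕ × ℕ) → (ℕ → ℕ → ℝ) → Option (ℕ → ℕ → ℝ)
  | [] => fun x => some x
  | (p :: rest) => fun x => (applyWord op rest x).bind (iterOp (op p.1) p.2)

/-- The highest-weight element `G⁰_μ` of `GT_ℤ(μ)`: the element killed by every `e_i`. -/
noncomputable def G0 (n : ℕ) (μ : ℕ → ℤ) : ℕ → ℕ → ℝ :=
  if h : ∃ P, P ∈ GTZ n μ ∧ ∀ i, 1 ≤ i → i ≤ n - 1 → eOp i P = none then h.choose else 0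

/-- The lowest-weight element `G*_μ` of `GT_ℤ(μ)`: the element killed by every `f_i`. -/
noncomputable def Gstar (n : ℕ) (μ : ℕ → ℤ) : ℕ → ℕ → ℝ :=
  if h : ∃ P, P ∈ GTZ n μ ∧ ∀ i, 1 ≤ i → i ≤ n - 1 → fOp i P = none then h.choose else 0

/-- The Demazure crystal `D(μ, w)` computed from the reduced word `l` for `w`:
`{f_{i₁}^{m₁} ⋯ f_{i_k}^{m_k}(G⁰_μ)} ∩ GT_ℤ(μ)`. -/
noncomputable def demCrystal (n : ℕ) (μ : ℕ → ℤ) (l : List ℕ) : Set (ℕ → ℕ → ℝ) :=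
  {P | P ∈ GTZ n μ ∧
    ∃ ms : List ℕ, ms.length = l.length ∧ applyWord fOp (l.zip ms) (G0 n μ) = some P}

/-- The opposite Demazure crystal `D(μ, w)^op` computed from the reduced word `l`
for `w·w₀`: `{e_{j₁}^{m₁} ⋯ e_{j_t}^{m_t}(G*_μ)} ∩ GT_ℤ(μ)`. -/
noncomputable def opDemCrystal (n : ℕ) (μ : ℕ → ℤ) (l : List ℕ) : Set (ℕ → ℕ → ℝ) :=
  {P | P ∈ GTZ n μ ∧
    ∃ ms : List ℕ, ms.length = l.length ∧ applyWord eOp (l.zip ms) (Gstar n μ) = some P}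

/-- `σ(F)`: the product of `s_{i-j}` over `(i,j) ∈ F` in increasing lexicographic order. -/
noncomputable def sigmaF (n : ℕ) (F : Finset (ℕ × ℕ)) : Equiv.Perm (Fin n) :=
  wordProd n (((pairsLex n).filter fun p => p ∈ F).map fun p => p.1 - p.2)

/-- `σ̄(F)`: the product of `s_j` over `(i,j) ∈ F` in increasing order for the total
order in which `(i,j)` precedes `(i',j')` iff `i < i'`, or `i = i'` and `j > j'`. -/
noncomputable def sigmaBarF (n : ℕ) (F : Finset (ℕ × ℕ)) : Equiv.Perm (Fin n) :=
  wordProd n (((pairsBar n).filter fun p => p ∈ F).map fun p => p.2)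

/-- The Kogan face `K(μ, F)`: the face of `GT(μ)` cut out by `a i j = a (i-1) j`,
`(i,j) ∈ F`. -/
def KoganFace (n : ℕ) (μ : ℕ → ℤ) (F : Finset (ℕ × ℕ)) : Set (ℕ → ℕ → ℝ) :=
  {a ∈ GTset n μ | ∀ p ∈ F, a p.1 p.2 = a (p.1 - 1) p.2}

/-- The dual Kogan face `K̄(μ, F)`: the face of `GT(μ)` cut out by
`a (i-1) j = a i (j+1)`, `(i,j) ∈ F`. -/
def dualKoganFace (n : ℕ) (μ : ℕ → ℤ) (F : Finset (ℕ × ℕ)) : Set (ℕ → ℕ → ℝ) :=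
  {a ∈ GTset n μ | ∀ p ∈ F, a (p.1 - 1) p.2 = a p.1 (p.2 + 1)}

/-- The BiKogan face `K_{λ,μ}(F, F')` of `GT(λ) × GT(μ)`. -/
def biKoganFace (n : ℕ) (lam μ : ℕ → ℤ) (F F' : Finset (ℕ × ℕ)) :
    Set ((ℕ → ℕ → ℝ) × (ℕ → ℕ → ℝ)) :=
  {PQ | PQ.1 ∈ GTset n lam ∧ PQ.2 ∈ GTset n μ ∧
    (∀ p ∈ F, PQ.1 (p.1 - 1) p.2 = PQ.1 p.1 (p.2 + 1)) ∧
    (∀ p ∈ F', PQ.2 p.1 p.2 = PQ.2 (p.1 - 1) p.2)}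

/-- `ϖ(F, F') = σ̄(F)⁻¹ · σ(F')`. -/
noncomputable def biVarpi (n : ℕ) (F F' : Finset (ℕ × ℕ)) : Equiv.Perm (Fin n) :=
  (sigmaBarF n F)⁻¹ * sigmaF n F'

/-- The BiKogan face `K_{λ,μ}(F, F')` is reduced if `ℓ(ϖ(F,F')) = |F| + |F'|`. -/
def biKoganReduced (n : ℕ) (F F' : Finset (ℕ × ℕ)) : Prop :=
  len n (biVarpi n F F') = F.card + F'.card



variable {n : ℕ}

abbrev InR (n : ℕ) (l : List ℕ) : Prop := ∀ j ∈ l, 1 ≤ j ∧ j ≤ n - 1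

lemma wordProd_nil : wordProd n [] = 1 := rfl

lemma wordProd_cons (c : ℕ) (l : List ℕ) :
    wordProd n (c :: l) = simpleRefl n c * wordProd n l := by
  simp [wordProd]

lemma wordProd_append (l m : List ℕ) :
    wordProd n (l ++ m) = wordProd n l * wordProd n m := by
  simp [wordProd]

lemma wordProd_singleton (c : ℕ) : wordProd n [c] = simpleRefl n c := by
  simp [wordProd]

lemma simpleRefl_mul_self (c : ℕ) : simpleRefl n c * simpleRefl n c = 1 := by
  unfold simpleRefl
  split
  · exact Equiv.swap_mul_self _ _
  · simp

lemma simpleRefl_inv (c : ℕ) : (simpleRefl n c)⁻¹ = simpleRefl n c :=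
  inv_eq_of_mul_eq_one_right (simpleRefl_mul_self c)

lemma simpleRefl_eq_swap {c : ℕ} (h1 : 1 ≤ c) (h2 : c ≤ n - 1) :
    ∃ e f : Fin n, (e : ℕ) + 1 = (f : ℕ) ∧ simpleRefl n c = Equiv.swap e f := by
  have h : 1 ≤ c ∧ c ≤ n - 1 := ⟨h1, h2⟩
  refine ⟨⟨c - 1, by omega⟩, ⟨c, by omega⟩, by simp; omega, ?_⟩
  rw [simpleRefl, dif_pos h]

lemma wordProd_reverse (l : List ℕ) : wordProd n l.reverse = (wordProd n l)⁻¹ := by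
  induction l with
  | nil => simp [wordProd]
  | cons c l ih =>
      rw [List.reverse_cons, wordProd_append, wordProd_singleton, ih, wordProd_cons,
        mul_inv_rev, simpleRefl_inv]

/-- generation of swaps by adjacent swaps -/
lemma swap_word_aux : ∀ d (x y : Fin n), x < y → (y : ℕ) = (x : ℕ) + d →
    ∃ l, InR n l ∧ wordProd n l = Equiv.swap x y := by
  intro d
  induction d with
  | zero => intro x y hxy h; exact absurd (Fin.ext h.symm) hxy.ne
  | succ d ih =>
      intro x y hxy h
      rcases Nat.eq_zero_or_pos d with rfl | hd
      · -- adjacent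
        refine ⟨[(x : ℕ) + 1], ?_, ?_⟩
        · intro j hj; simp at hj; subst hj
          have : (y : ℕ) < n := y.isLt
          omega
        · rw [wordProd_singleton]
          have h1 : 1 ≤ (x : ℕ) + 1 := by omega
          have h2 : (x : ℕ) + 1 ≤ n - 1 := by have := y.isLt; omega
          rw [simpleRefl, dif_pos ⟨h1, h2⟩]
          congr 1 <;> apply Fin.ext <;> simp <;> omega
      · -- split off one step
        have hzlt : (x : ℕ) + 1 < n := by have := y.isLt; omega
        set z : Fin n := ⟨(x : ℕ) + 1, hzlt⟩ with hz
        have hxz : x < z := by rw [Fin.lt_def]; simp [hz]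
        have hzy : z < y := by rw [Fin.lt_def]; simp [hz]; omega
        obtain ⟨l, hl, hPl⟩ := ih z y hzy (by simp [hz]; omega)
        obtain ⟨l₁, hl₁, hPl₁⟩ : ∃ l, InR n l ∧ wordProd n l = Equiv.swap x z := by
          refine ⟨[(x : ℕ) + 1], ?_, ?_⟩
          · intro j hj; simp at hj; subst hj; omega
          · rw [wordProd_singleton, simpleRefl, dif_pos ⟨by omega, by omega⟩]
            congr 1 <;> apply Fin.ext <;> simp [hz]
        refine ⟨l₁ ++ l ++ l₁, ?_, ?_⟩
        · intro j hj
          rcases List.mem_append.1 hj with hj' | hj'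
          · rcases List.mem_append.1 hj' with h2 | h2
            exacts [hl₁ j h2, hl j h2]
          · exact hl₁ j hj'
        · rw [wordProd_append, wordProd_append, hPl, hPl₁]
          have hne1 : z ≠ x := hxz.ne'
          have hne2 : y ≠ x := (hxz.trans hzy).ne'
          have hne3 : y ≠ z := hzy.ne'
          have : Equiv.swap x z * Equiv.swap z y * (Equiv.swap x z)⁻¹
              = Equiv.swap (Equiv.swap x z z) (Equiv.swap x z y) :=
            (Equiv.swap_apply_apply (Equiv.swap x z) z y).symm
          rw [Equiv.swap_apply_right, Equiv.swap_apply_of_ne_of_ne hne2 hne3] at this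
          calc Equiv.swap x z * Equiv.swap z y * Equiv.swap x z
              = Equiv.swap x z * Equiv.swap z y * (Equiv.swap x z)⁻¹ := by
                rw [Equiv.swap_inv]
            _ = Equiv.swap x y := this

lemma generation (w : Equiv.Perm (Fin n)) : ∃ l, InR n l ∧ wordProd n l = w := by
  refine Equiv.Perm.swap_induction_on w ⟨[], fun j hj => absurd hj List.not_mem_nil, rfl⟩
    fun f x y hxy ih => ?_
  obtain ⟨l, hl, hPl⟩ := ih
  obtain ⟨m, hm, hPm⟩ : ∃ m, InR n m ∧ wordProd n m = Equiv.swap x y := by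
    rcases lt_or_gt_of_ne hxy with h | h
    · exact swap_word_aux ((y : ℕ) - (x : ℕ)) x y h (by omega)
    · obtain ⟨m, hm, hPm⟩ := swap_word_aux ((x : ℕ) - (y : ℕ)) y x h (by omega)
      exact ⟨m, hm, by rw [hPm, Equiv.swap_comm]⟩
  refine ⟨m ++ l, ?_, by rw [wordProd_append, hPm, hPl]⟩
  intro j hj
  rcases List.mem_append.1 hj with hj' | hj'
  exacts [hm j hj', hl j hj']

lemma exists_reduced (w : Equiv.Perm (Fin n)) :
    ∃ l, InR n l ∧ l.length = len n w ∧ wordProd n l = w := by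
  have hne : {k | ∃ l : List ℕ, InR n l ∧ l.length = k ∧ wordProd n l = w}.Nonempty := by
    obtain ⟨l, hl, hPl⟩ := generation w
    exact ⟨l.length, l, hl, rfl, hPl⟩
  exact Nat.sInf_mem hne

lemma len_le {l : List ℕ} (h : InR n l) : len n (wordProd n l) ≤ l.length :=
  Nat.sInf_le ⟨l, h, rfl, rfl⟩



variable {n : ℕ}

lemma sign_simpleRefl_inR {c : ℕ} (h1 : 1 ≤ c) (h2 : c ≤ n - 1) :
    Equiv.Perm.sign (simpleRefl n c) = -1 := by
  obtain ⟨e, f, hef, hS⟩ := simpleRefl_eq_swap h1 h2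
  rw [hS, Equiv.Perm.sign_swap]
  intro h; rw [h] at hef; omega

lemma sign_wordProd {l : List ℕ} (h : InR n l) :
    Equiv.Perm.sign (wordProd n l) = (-1) ^ l.length := by
  induction l with
  | nil => simp [wordProd]
  | cons c l ih =>
      rw [wordProd_cons, map_mul, ih (fun j hj => h j (List.mem_cons_of_mem c hj)),
        sign_simpleRefl_inR (h c List.mem_cons_self).1 (h c List.mem_cons_self).2]
      rw [List.length_cons, pow_succ]
      exact mul_comm _ _

lemma parity_word {l : List ℕ} {w : Equiv.Perm (Fin n)} (h : InR n l) (hP : wordProd n l = w) :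
    l.length % 2 = len n w % 2 := by
  obtain ⟨m, hm, hlen, hPm⟩ := exists_reduced w
  have h1 : ((-1 : ℤˣ)) ^ l.length = (-1) ^ m.length := by
    rw [← sign_wordProd h, ← sign_wordProd hm, hP, hPm]
  have h2 : Even l.length ↔ Even m.length := by
    constructor <;> intro he
    · rw [(Even.neg_one_pow he : ((-1:ℤˣ))^l.length = 1)] at h1
      by_contra ho
      rw [(Odd.neg_one_pow (Nat.not_even_iff_odd.1 ho) : ((-1:ℤˣ))^m.length = -1)] at h1
      exact absurd h1.symm (by decide)
    · rw [(Even.neg_one_pow he : ((-1:ℤˣ))^m.length = 1)] at h1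
      by_contra ho
      rw [(Odd.neg_one_pow (Nat.not_even_iff_odd.1 ho) : ((-1:ℤˣ))^l.length = -1)] at h1
      exact absurd h1 (by decide)
    
  rw [← hlen]
  rw [Nat.even_iff, Nat.even_iff] at h2
  omega

lemma len_one : len n (1 : Equiv.Perm (Fin n)) = 0 :=
  Nat.le_zero.1 (len_le (l := []) (fun j hj => absurd hj List.not_mem_nil))

lemma eq_one_of_len_eq_zero {w : Equiv.Perm (Fin n)} (h : len n w = 0) : w = 1 := by
  obtain ⟨l, hl, hlen, hPl⟩ := exists_reduced w
  rw [h, List.length_eq_zero_iff] at hlen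
  rw [← hPl, hlen]; rfl

lemma len_mul_le (u v : Equiv.Perm (Fin n)) : len n (u * v) ≤ len n u + len n v := by
  obtain ⟨l, hl, hlen, hPl⟩ := exists_reduced u
  obtain ⟨m, hm, hmlen, hPm⟩ := exists_reduced v
  have : wordProd n (l ++ m) = u * v := by rw [wordProd_append, hPl, hPm]
  calc len n (u * v) ≤ (l ++ m).length := this ▸ len_le (by
        intro j hj; rcases List.mem_append.1 hj with h | h; exacts [hl j h, hm j h])
    _ = len n u + len n v := by rw [List.length_append, hlen, hmlen]

lemma len_simpleRefl_le_one (c : ℕ) : len n (simpleRefl n c) ≤ 1 := by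
  by_cases h : 1 ≤ c ∧ c ≤ n - 1
  · have : len n (wordProd n [c]) ≤ [c].length :=
      len_le (by intro j hj; simp at hj; subst hj; exact h)
    rwa [wordProd_singleton] at this
  · rw [show simpleRefl n c = 1 by rw [simpleRefl, dif_neg h], len_one]; omega

lemma len_mul_simple_le (w : Equiv.Perm (Fin n)) (c : ℕ) :
    len n (w * simpleRefl n c) ≤ len n w + 1 ∧ len n w ≤ len n (w * simpleRefl n c) + 1 := by
  have key : ∀ v : Equiv.Perm (Fin n), len n (v * simpleRefl n c) ≤ len n v + 1 := by
    intro v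
    calc len n (v * simpleRefl n c) ≤ len n v + len n (simpleRefl n c) := len_mul_le _ _
      _ ≤ len n v + 1 := by have := len_simpleRefl_le_one (n := n) c; omega
  refine ⟨key w, ?_⟩
  have := key (w * simpleRefl n c)
  rwa [mul_assoc, simpleRefl_mul_self, mul_one] at this

lemma len_parity_mul_simple {c : ℕ} (h1 : 1 ≤ c) (h2 : c ≤ n - 1) (w : Equiv.Perm (Fin n)) :
    len n (w * simpleRefl n c) % 2 ≠ len n w % 2 := by
  obtain ⟨l, hl, hlen, hPl⟩ := exists_reduced w
  have hword : wordProd n (l ++ [c]) = w * simpleRefl n c := by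
    rw [wordProd_append, hPl, wordProd_singleton]
  have hInR : InR n (l ++ [c]) := by
    intro j hj; rcases List.mem_append.1 hj with h | h
    · exact hl j h
    · simp at h; subst h; exact ⟨h1, h2⟩
  have := parity_word hInR hword
  rw [List.length_append, List.length_singleton, hlen] at this
  omega

/-- key dichotomy -/
lemma len_mul_simple {c : ℕ} (h1 : 1 ≤ c) (h2 : c ≤ n - 1) (w : Equiv.Perm (Fin n)) :
    len n (w * simpleRefl n c) = len n w + 1 ∨ len n w = len n (w * simpleRefl n c) + 1 := by
  have h3 := len_mul_simple_le w c
  have h4 := len_parity_mul_simple h1 h2 w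
  omega



variable {n : ℕ}

lemma ivt {Q : ℕ → Prop} (k : ℕ) (h0 : Q 0) (hk : ¬ Q k) : ∃ i < k, Q i ∧ ¬ Q (i + 1) := by
  induction k with
  | zero => exact absurd h0 hk
  | succ k ih =>
      by_cases hQ : Q k
      · exact ⟨k, Nat.lt_succ_self k, hQ, hk⟩
      · obtain ⟨i, hi, h1, h2⟩ := ih hQ
        exact ⟨i, hi.trans (Nat.lt_succ_self k), h1, h2⟩

lemma adj_flip {e f x y : Fin n} (hef : (e : ℕ) + 1 = (f : ℕ)) (hxy : x < y)
    (h : Equiv.swap e f y < Equiv.swap e f x) : x = e ∧ y = f := by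
  have hxyv : (x : ℕ) < (y : ℕ) := hxy
  by_cases hxe : x = e <;> by_cases hyf : y = f
  · exact ⟨hxe, hyf⟩
  · exfalso
    have hye : y ≠ e := by rw [← hxe]; exact hxy.ne'
    rw [hxe, Equiv.swap_apply_left, Equiv.swap_apply_of_ne_of_ne hye hyf] at h
    have h1 : (y : ℕ) < (f : ℕ) := h
    have h2 : (e : ℕ) < (y : ℕ) := by rw [← hxe]; exact hxyv
    omega
  · exfalso
    have hxf : x ≠ f := by rw [← hyf]; exact hxy.ne
    rw [hyf, Equiv.swap_apply_right, Equiv.swap_apply_of_ne_of_ne hxe hxf] at h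
    have h1 : (e : ℕ) < (x : ℕ) := h
    have h2 : (x : ℕ) < (f : ℕ) := by rw [← hyf]; exact hxyv
    omega
  · exfalso
    by_cases hxf : x = f
    · have hye : y ≠ e := by
        intro hy
        rw [hxf] at hxyv; rw [hy] at hxyv
        omega
      rw [hxf, Equiv.swap_apply_right, Equiv.swap_apply_of_ne_of_ne hye hyf] at h
      have h1 : (y : ℕ) < (e : ℕ) := h
      rw [hxf] at hxyv
      omega
    · by_cases hye : y = e
      · rw [hye, Equiv.swap_apply_left, Equiv.swap_apply_of_ne_of_ne hxe hxf] at h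
        have h1 : (f : ℕ) < (x : ℕ) := h
        rw [hye] at hxyv
        omega
      · rw [Equiv.swap_apply_of_ne_of_ne hxe hxf,
          Equiv.swap_apply_of_ne_of_ne hye hyf] at h
        exact absurd h (not_lt.2 hxy.le)

/-- Strong exchange, combinatorial core. -/
lemma exchange_core {a b : Fin n} (hab : a < b) {w : Equiv.Perm (Fin n)} (hw : w b < w a)
    {l : List ℕ} (hl : InR n l) (hPl : wordProd n l = w) :
    ∃ i < l.length, w * Equiv.swap a b = wordProd n (l.eraseIdx i) := by
  set u : ℕ → Equiv.Perm (Fin n) := fun i => wordProd n (l.drop i) with hu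
  have hQ0 : u 0 b < u 0 a := by simpa [hu, hPl] using hw
  have hQk : ¬ u l.length b < u l.length a := by
    simp only [hu, List.drop_length]
    show ¬ (wordProd n [] b < wordProd n [] a)
    rw [wordProd_nil]
    simpa using not_lt.2 hab.le
  obtain ⟨i, hik, hQi, hQi1⟩ := ivt (Q := fun i => u i b < u i a) l.length hQ0 hQk
  set c := l[i] with hc
  have hcmem : c ∈ l := List.getElem_mem hik
  obtain ⟨hc1, hc2⟩ := hl c hcmem
  obtain ⟨e, f, hef, hS⟩ := simpleRefl_eq_swap hc1 hc2
  have hdrop : u i = simpleRefl n c * u (i + 1) := by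
    rw [hu]
    simp only
    rw [← wordProd_cons]
    congr 1
    exact List.drop_eq_getElem_cons hik
  set x := u (i + 1) a with hx
  set y := u (i + 1) b with hy
  have hxyne : x ≠ y := fun h => (hab.ne (Equiv.injective _ h)).elim
  have hxy : x < y := by
    rcases lt_or_gt_of_ne hxyne with h | h
    · exact h
    · exact absurd h (by simpa [hx, hy] using hQi1)
  have hQi' : Equiv.swap e f y < Equiv.swap e f x := by
    have : u i b < u i a := hQi
    rw [hdrop] at this
    simpa [hS, hx, hy] using this
  obtain ⟨hxe, hyf⟩ := adj_flip hef hxy hQi'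
  -- conjugation
  have hconj : u (i + 1) * Equiv.swap a b * (u (i + 1))⁻¹ = simpleRefl n c := by
    rw [hS, ← hxe, ← hyf, hx, hy]
    exact (Equiv.swap_apply_apply (u (i + 1)) a b).symm
  have hkey : u (i + 1) * Equiv.swap a b = simpleRefl n c * u (i + 1) := by
    rw [← hconj]; group
  refine ⟨i, hik, ?_⟩
  have hsplit : w = wordProd n (l.take i) * u i := by
    rw [hu, ← hPl]
    simp only
    rw [← wordProd_append, List.take_append_drop]
  rw [List.eraseIdx_eq_take_drop_succ, wordProd_append, hsplit, hdrop]
  rw [mul_assoc, mul_assoc, hkey, ← mul_assoc (simpleRefl n c) (simpleRefl n c) (u (i + 1)),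
    simpleRefl_mul_self, one_mul]

/-- length characterization of inversions -/
lemma inversion_iff_len {a b : Fin n} (hab : a < b) (w : Equiv.Perm (Fin n)) :
    w b < w a ↔ len n (w * Equiv.swap a b) < len n w := by
  constructor
  · intro hw
    obtain ⟨l, hl, hlen, hPl⟩ := exists_reduced w
    obtain ⟨i, hik, heq⟩ := exchange_core hab hw hl hPl
    have hlpos : 1 ≤ len n w := by
      rcases Nat.eq_zero_or_pos (len n w) with h0 | h
      · exfalso
        have := eq_one_of_len_eq_zero h0
        subst this
        simp at hw
        exact absurd hw (not_lt.2 hab.le)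
      · exact h
    have : len n (w * Equiv.swap a b) ≤ (l.eraseIdx i).length := by
      rw [heq]
      exact len_le (fun j hj => hl j ((List.eraseIdx_sublist l i).mem hj))
    rw [List.length_eraseIdx_of_lt (hlen ▸ hik)] at this
    omega
  · intro hlen
    by_contra hcon
    have hne : w a ≠ w b := fun h => hab.ne (Equiv.injective _ h)
    have hlt : w a < w b := lt_of_le_of_ne (not_lt.1 hcon) hne
    set w' := w * Equiv.swap a b with hw'
    have h1 : w' b < w' a := by
      simp only [hw', Equiv.Perm.mul_apply, Equiv.swap_apply_left, Equiv.swap_apply_right]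
      exact hlt
    have h2 : w' * Equiv.swap a b = w := by
      rw [hw', mul_assoc, Equiv.swap_mul_self, mul_one]
    obtain ⟨l, hl, hlen', hPl⟩ := exists_reduced w'
    obtain ⟨i, hik, heq⟩ := exchange_core hab h1 hl hPl
    rw [h2] at heq
    have : len n w ≤ (l.eraseIdx i).length :=
      heq ▸ len_le (fun j hj => hl j ((List.eraseIdx_sublist l i).mem hj))
    rw [List.length_eraseIdx_of_lt (hlen' ▸ hik)] at this
    omega

/-- Strong exchange, general form -/
lemma exchange {a b : Fin n} (hab : a ≠ b) {w : Equiv.Perm (Fin n)}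
    (h : len n (w * Equiv.swap a b) < len n w)
    {l : List ℕ} (hl : InR n l) (hPl : wordProd n l = w) :
    ∃ i < l.length, w * Equiv.swap a b = wordProd n (l.eraseIdx i) := by
  rcases lt_or_gt_of_ne hab with hlt | hlt
  · exact exchange_core hlt ((inversion_iff_len hlt w).2 h) hl hPl
  · rw [Equiv.swap_comm] at h ⊢
    exact exchange_core hlt ((inversion_iff_len hlt w).2 h) hl hPl



variable {n : ℕ}

lemma simpleRefl_ne {c : ℕ} (h1 : 1 ≤ c) (h2 : c ≤ n - 1) :
    ∃ e f : Fin n, e ≠ f ∧ simpleRefl n c = Equiv.swap e f := by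
  obtain ⟨e, f, hef, hS⟩ := simpleRefl_eq_swap h1 h2
  exact ⟨e, f, fun h => by rw [h] at hef; omega, hS⟩

lemma deletion_aux : ∀ (N : ℕ) (l : List ℕ), l.length ≤ N → InR n l →
    ∃ m, m.Sublist l ∧ InR n m ∧ len n (wordProd n m) = m.length ∧
      wordProd n m = wordProd n l := by
  intro N
  induction N with
  | zero =>
      intro l hlen _
      rw [Nat.le_zero, List.length_eq_zero_iff] at hlen
      subst hlen
      exact ⟨[], List.Sublist.refl [], fun j hj => absurd hj List.not_mem_nil,
        by rw [wordProd_nil, len_one]; rfl, rfl⟩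
  | succ N ih =>
      intro l hlen hl
      by_cases hred : len n (wordProd n l) = l.length
      · exact ⟨l, List.Sublist.refl l, hl, hred, rfl⟩
      have hlt : len n (wordProd n l) < l.length := lt_of_le_of_ne (len_le hl) hred
      have hstep : ∃ i < l.length,
          len n (wordProd n (l.take (i + 1))) < len n (wordProd n (l.take i)) := by
        by_contra hcon
        push_neg at hcon
        have hmono : ∀ i, i ≤ l.length → len n (wordProd n (l.take i)) = i := by
          intro i
          induction i with
          | zero => intro _; simp [wordProd_nil, len_one]
          | succ i ih2 =>
              intro hi
              have h1 : len n (wordProd n (l.take i)) = i := ih2 (by omega)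
              have h2 : len n (wordProd n (l.take i)) ≤ len n (wordProd n (l.take (i + 1))) :=
                hcon i (by omega)
              have h3 : len n (wordProd n (l.take (i + 1))) ≤ i + 1 := by
                have := len_le (n := n) (l := l.take (i + 1))
                  (fun j hj => hl j ((List.take_sublist _ _).mem hj))
                rwa [List.length_take, min_eq_left hi] at this
              have h4 : len n (wordProd n (l.take (i + 1))) % 2 = (i + 1) % 2 := by
                have := parity_word (n := n) (l := l.take (i + 1))
                  (fun j hj => hl j ((List.take_sublist _ _).mem hj)) rfl
                rw [List.length_take, min_eq_left hi] at this
                omega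
              omega
        have := hmono l.length le_rfl
        rw [List.take_length] at this
        omega
      obtain ⟨i, hik, hdesc⟩ := hstep
      have htake : l.take (i + 1) = l.take i ++ [l[i]] := by
        rw [List.take_succ, List.getElem?_eq_getElem hik]
        rfl
      have hPtake : wordProd n (l.take (i + 1)) = wordProd n (l.take i) * simpleRefl n l[i] := by
        rw [htake, wordProd_append, wordProd_singleton]
      obtain ⟨hc1, hc2⟩ := hl l[i] (List.getElem_mem hik)
      obtain ⟨e, f, hef, hS⟩ := simpleRefl_ne hc1 hc2
      have hexch : ∃ i' < (l.take i).length,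
          wordProd n (l.take i) * Equiv.swap e f = wordProd n ((l.take i).eraseIdx i') := by
        refine exchange hef ?_ (fun j hj => hl j ((List.take_sublist _ _).mem hj)) rfl
        rw [← hS, ← hPtake]
        exact hdesc
      obtain ⟨i', hi', heq⟩ := hexch
      set m₀ := (l.take i).eraseIdx i' ++ l.drop (i + 1) with hm₀
      have hPm₀ : wordProd n m₀ = wordProd n l := by
        rw [hm₀, wordProd_append, ← heq, ← hS, ← hPtake, ← wordProd_append,
          List.take_append_drop]
      have hsub : m₀.Sublist l := by
        have h1 : m₀.Sublist (l.take i ++ l.drop (i + 1)) :=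
          List.Sublist.append (List.eraseIdx_sublist _ i') (List.Sublist.refl _)
        have h2 : (l.take i ++ l.drop (i + 1)).Sublist l := by
          rw [← List.eraseIdx_eq_take_drop_succ]
          exact List.eraseIdx_sublist l i
        exact h1.trans h2
      have hInR : InR n m₀ := fun j hj => hl j (hsub.mem hj)
      have hlen₀ : m₀.length ≤ N := by
        have e1 : ((l.take i).eraseIdx i').length = (l.take i).length - 1 :=
          List.length_eraseIdx_of_lt hi'
        have e2 : (l.take i).length = i := by rw [List.length_take]; omega
        have e3 : (l.drop (i + 1)).length = l.length - (i + 1) := List.length_drop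
        rw [hm₀, List.length_append, e1, e2, e3]
        omega
      obtain ⟨m, hmsub, hmInR, hmred, hmP⟩ := ih m₀ hlen₀ hInR
      exact ⟨m, hmsub.trans hsub, hmInR, hmred, by rw [hmP, hPm₀]⟩

lemma deletion {l : List ℕ} (hl : InR n l) :
    ∃ m, m.Sublist l ∧ IsReduced n m ∧ wordProd n m = wordProd n l := by
  obtain ⟨m, h1, h2, h3, h4⟩ := deletion_aux l.length l le_rfl hl
  exact ⟨m, h1, ⟨h2, h3⟩, h4⟩

lemma isReduced_append {l m : List ℕ} (h : IsReduced n (l ++ m)) :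
    IsReduced n l ∧ IsReduced n m := by
  obtain ⟨hInR, hlen⟩ := h
  have hInRl : InR n l := fun j hj => hInR j (List.mem_append_left m hj)
  have hInRm : InR n m := fun j hj => hInR j (List.mem_append_right l hj)
  have h1 : len n (wordProd n l) ≤ l.length := len_le hInRl
  have h2 : len n (wordProd n m) ≤ m.length := len_le hInRm
  have h3 :
      len n (wordProd n (l ++ m)) ≤ len n (wordProd n l) + len n (wordProd n m) := by
    rw [wordProd_append]
    exact len_mul_le _ _
  rw [hlen, List.length_append] at h3
  exact ⟨⟨hInRl, by omega⟩, ⟨hInRm, by omega⟩⟩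

lemma len_inv (w : Equiv.Perm (Fin n)) : len n w⁻¹ = len n w := by
  have key : ∀ v : Equiv.Perm (Fin n), len n v⁻¹ ≤ len n v := by
    intro v
    obtain ⟨l, hl, hlen, hPl⟩ := exists_reduced v
    have : wordProd n l.reverse = v⁻¹ := by rw [wordProd_reverse, hPl]
    calc len n v⁻¹ ≤ l.reverse.length :=
          this ▸ len_le (fun j hj => hl j (List.mem_reverse.1 hj))
      _ = len n v := by rw [List.length_reverse, hlen]
  have h2 := key w⁻¹
  rw [inv_inv] at h2
  exact le_antisymm (key w) h2

lemma isReduced_reverse {l : List ℕ} (h : IsReduced n l) : IsReduced n l.reverse := by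
  obtain ⟨hInR, hlen⟩ := h
  refine ⟨fun j hj => hInR j (List.mem_reverse.1 hj), ?_⟩
  rw [wordProd_reverse, len_inv, List.length_reverse]
  exact hlen

lemma bruhatLE_inv {u w : Equiv.Perm (Fin n)} (h : bruhatLE n u w) :
    bruhatLE n u⁻¹ w⁻¹ := by
  obtain ⟨l, l', hred, hPl, hsub, hred', hPl'⟩ := h
  exact ⟨l.reverse, l'.reverse, isReduced_reverse hred, by rw [wordProd_reverse, hPl],
    hsub.reverse, isReduced_reverse hred', by rw [wordProd_reverse, hPl']⟩

lemma bruhatLE_refl (w : Equiv.Perm (Fin n)) : bruhatLE n w w := by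
  obtain ⟨l, hl, hlen, hPl⟩ := exists_reduced w
  exact ⟨l, l, ⟨hl, by rw [hPl, ← hlen]⟩, hPl, List.Sublist.refl l, ⟨hl, by rw [hPl, ← hlen]⟩, hPl⟩

lemma bruhatLE_len_le {u w : Equiv.Perm (Fin n)} (h : bruhatLE n u w) : len n u ≤ len n w := by
  obtain ⟨l, l', hred, hPl, hsub, hred', hPl'⟩ := h
  calc len n u = l'.length := by rw [← hPl', hred'.2]
    _ ≤ l.length := hsub.length_le
    _ = len n w := by rw [← hPl, hred.2]

lemma bruhatLE_antisymm {u w : Equiv.Perm (Fin n)} (h1 : bruhatLE n u w)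
    (h2 : bruhatLE n w u) : u = w := by
  have hle := le_antisymm (bruhatLE_len_le h1) (bruhatLE_len_le h2)
  obtain ⟨l, l', hred, hPl, hsub, hred', hPl'⟩ := h1
  have hlen : l'.length = l.length := by
    have e1 : len n u = l'.length := by rw [← hPl', hred'.2]
    have e2 : len n w = l.length := by rw [← hPl, hred.2]
    omega
  rw [← hPl', ← hPl, hsub.eq_of_length hlen]

lemma bruhatLE_one_le (w : Equiv.Perm (Fin n)) : bruhatLE n 1 w := by
  obtain ⟨l, hl, hlen, hPl⟩ := exists_reduced w
  exact ⟨l, [], ⟨hl, by rw [hPl, ← hlen]⟩, hPl, List.nil_sublist l,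
    ⟨fun j hj => absurd hj List.not_mem_nil, by rw [wordProd_nil, len_one]; rfl⟩, rfl⟩

lemma bruhatLE_le_one {u : Equiv.Perm (Fin n)} (h : bruhatLE n u 1) : u = 1 := by
  obtain ⟨l, l', hred, hPl, hsub, hred', hPl'⟩ := h
  have : l.length = 0 := by rw [← hred.2, hPl, len_one]
  rw [List.length_eq_zero_iff] at this
  subst this
  rw [List.sublist_nil] at hsub
  subst hsub
  rw [← hPl', wordProd_nil]



variable {n : ℕ}

def Rel (n : ℕ) (w₁ w₂ : Equiv.Perm (Fin n)) : Prop :=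
  ∃ a b : Fin n, a ≠ b ∧ w₂ = w₁ * Equiv.swap a b ∧ len n w₁ < len n w₂

abbrev leC (n : ℕ) : Equiv.Perm (Fin n) → Equiv.Perm (Fin n) → Prop :=
  Relation.ReflTransGen (Rel n)

lemma sublist_concat_cases {l' m : List ℕ} {c : ℕ} (h : l'.Sublist (m ++ [c])) :
    l'.Sublist m ∨ ∃ p, p.Sublist m ∧ l' = p ++ [c] := by
  rw [List.sublist_append_iff] at h
  obtain ⟨l₁, l₂, rfl, h1, h2⟩ := h
  rw [List.sublist_singleton] at h2
  rcases h2 with rfl | rfl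
  · left; rw [List.append_nil]; exact h1
  · right; exact ⟨l₁, h1, rfl⟩

/-- chain implies subword of every reduced word -/
lemma chain_subword {u w : Equiv.Perm (Fin n)} (h : leC n u w) :
    ∀ l, IsReduced n l → wordProd n l = w →
      ∃ l', l'.Sublist l ∧ IsReduced n l' ∧ wordProd n l' = u := by
  induction h with
  | refl => exact fun l hred hPl => ⟨l, List.Sublist.refl l, hred, hPl⟩
  | @tail b c hab hbc ih =>
      intro l hred hPl
      obtain ⟨a₀, b₀, hne, hbc', hlen⟩ := hbc
      have hb : b = c * Equiv.swap a₀ b₀ := by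
        rw [hbc', mul_assoc, Equiv.swap_mul_self, mul_one]
      obtain ⟨i, hik, heq⟩ := exchange hne (show len n (c * Equiv.swap a₀ b₀) < len n c by
        rw [← hb]; exact hlen) hred.1 hPl
      obtain ⟨m, hmsub, hmred, hmP⟩ := deletion
        (fun j hj => hred.1 j ((List.eraseIdx_sublist l i).mem hj))
      obtain ⟨l', hsub', hred', hP'⟩ := ih m hmred (by rw [hmP, ← heq, ← hb])
      exact ⟨l', (hsub'.trans hmsub).trans (List.eraseIdx_sublist l i), hred', hP'⟩

def D2S (n k : ℕ) : Prop := ∀ w : Equiv.Perm (Fin n), ∀ l l' : List ℕ, len n w = k →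
  IsReduced n l → wordProd n l = w → l'.Sublist l → leC n (wordProd n l') w

def LIFTS (n k : ℕ) : Prop := ∀ (x u : Equiv.Perm (Fin n)) (c : ℕ), len n x = k →
  1 ≤ c → c ≤ n - 1 → leC n u x → len n u < len n (u * simpleRefl n c) →
  len n (x * simpleRefl n c) < len n x → leC n (u * simpleRefl n c) x

def UPS (n k : ℕ) : Prop := ∀ (w u : Equiv.Perm (Fin n)) (c : ℕ), len n w = k →
  1 ≤ c → c ≤ n - 1 → leC n u w → len n u < len n (u * simpleRefl n c) →
  len n w < len n (w * simpleRefl n c) →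
  leC n (u * simpleRefl n c) (w * simpleRefl n c)

lemma big : ∀ k, D2S n k ∧ LIFTS n k ∧ UPS n k := by
  intro k
  induction k using Nat.strong_induction_on with
  | _ k IH =>
  have hD2 : D2S n k := by
    intro w l l' hk hred hPl hsub
    rcases List.eq_nil_or_concat l with rfl | ⟨m, c, rfl⟩
    all_goals try rw [List.concat_eq_append] at hred hPl hsub
    · rw [List.sublist_nil] at hsub
      subst hsub
      have hw1 : w = 1 := by rw [← hPl]; rfl
      have : wordProd n ([] : List ℕ) = w := by rw [hw1]; rfl
      rw [this]
    · obtain ⟨hredm, hredc⟩ := isReduced_append (l := m) (m := [c]) hred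
      set w₂ := wordProd n m with hw₂
      have hc : 1 ≤ c ∧ c ≤ n - 1 := hred.1 c (by simp)
      have hlenw : len n w = m.length + 1 := by
        rw [← hPl, hred.2, List.length_append, List.length_singleton]
      have hlenw₂ : len n w₂ = m.length := hredm.2
      have hwdecomp : w = w₂ * simpleRefl n c := by
        rw [← hPl, wordProd_append, wordProd_singleton]
      have hstep : Rel n w₂ w := by
        obtain ⟨e, f, hef, hS⟩ := simpleRefl_ne hc.1 hc.2
        exact ⟨e, f, hef, by rw [hwdecomp, hS], by omega⟩
      have hk1 : m.length < k := by omega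
      rcases sublist_concat_cases hsub with h' | ⟨p, hpm, rfl⟩
      · exact ((IH m.length hk1).1 w₂ m l' hlenw₂ hredm rfl h').tail hstep
      · have hup₂ : leC n (wordProd n p) w₂ := (IH m.length hk1).1 w₂ m p hlenw₂ hredm rfl hpm
        have hPl' : wordProd n (p ++ [c]) = wordProd n p * simpleRefl n c := by
          rw [wordProd_append, wordProd_singleton]
        rcases len_mul_simple hc.1 hc.2 (wordProd n p) with hup | hdown
        · have hres := (IH m.length hk1).2.2 w₂ (wordProd n p) c hlenw₂ hc.1 hc.2 hup₂
            (by omega) (by rw [← hwdecomp]; omega)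
          rw [hPl']
          rw [← hwdecomp] at hres
          exact hres
        · have hstep2 : Rel n (wordProd n (p ++ [c])) (wordProd n p) := by
            obtain ⟨e, f, hef, hS⟩ := simpleRefl_ne hc.1 hc.2
            refine ⟨e, f, hef, ?_, ?_⟩
            · rw [hPl', mul_assoc, ← hS, simpleRefl_mul_self, mul_one]
            · rw [hPl']; omega
          exact ((Relation.ReflTransGen.single hstep2).trans hup₂).tail hstep
  have hLIFT : LIFTS n k := by
    intro x u c hk hc1 hc2 hch huup hxdown
    obtain ⟨m, hmInR, hmlen, hmP⟩ := exists_reduced (x * simpleRefl n c)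
    have hdich := len_mul_simple hc1 hc2 x
    have hml : m.length = k - 1 ∧ 1 ≤ k := by omega
    have hPll : wordProd n (m ++ [c]) = x := by
      rw [wordProd_append, wordProd_singleton, hmP, mul_assoc, simpleRefl_mul_self, mul_one]
    have hlInR : InR n (m ++ [c]) := by
      intro j hj
      rcases List.mem_append.1 hj with h | h
      · exact hmInR j h
      · simp at h; subst h; exact ⟨hc1, hc2⟩
    have hlred : IsReduced n (m ++ [c]) := by
      refine ⟨hlInR, ?_⟩
      rw [hPll, List.length_append, List.length_singleton]
      omega
    obtain ⟨l', hsub, hl'red, hl'P⟩ := chain_subword hch (m ++ [c]) hlred hPll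
    rcases sublist_concat_cases hsub with h' | ⟨p, hpm, rfl⟩
    · have hres := hD2 x (m ++ [c]) (l' ++ [c]) hk hlred hPll
        (List.Sublist.append h' (List.Sublist.refl [c]))
      rw [wordProd_append, wordProd_singleton, hl'P] at hres
      exact hres
    · exfalso
      have hupeq : u * simpleRefl n c = wordProd n p := by
        rw [← hl'P, wordProd_append, wordProd_singleton, mul_assoc, simpleRefl_mul_self,
          mul_one]
      have h1 : len n (u * simpleRefl n c) ≤ p.length := by
        rw [hupeq]
        exact len_le (fun j hj => hlInR j (hsub.mem (List.mem_append_left [c] hj)))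
      have h2 : len n u = p.length + 1 := by
        rw [← hl'P, hl'red.2, List.length_append, List.length_singleton]
      omega
  have hUP : UPS n k := by
    intro w u c hk hc1 hc2 hch huup hwup
    rcases Relation.ReflTransGen.cases_tail hch with heq | ⟨x, hux, hxw⟩
    · rw [heq]
    · obtain ⟨a, b, hab, hwx, hlenxw⟩ := hxw
      obtain ⟨e, f, hef, hS⟩ := simpleRefl_ne hc1 hc2
      rcases len_mul_simple hc1 hc2 x with hxup | hxdown
      · have h1 : leC n (u * simpleRefl n c) (x * simpleRefl n c) :=
          (IH (len n x) (by omega)).2.2 x u c rfl hc1 hc2 hux huup (by omega)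
        refine h1.tail ?_
        refine ⟨simpleRefl n c a, simpleRefl n c b,
          fun h => hab (Equiv.injective _ h), ?_, by omega⟩
        have hconj : simpleRefl n c * Equiv.swap a b * (simpleRefl n c)⁻¹
            = Equiv.swap (simpleRefl n c a) (simpleRefl n c b) :=
          (Equiv.swap_apply_apply (simpleRefl n c) a b).symm
        rw [simpleRefl_inv] at hconj
        have key : x * Equiv.swap a b * simpleRefl n c
            = x * simpleRefl n c * (simpleRefl n c * (Equiv.swap a b * simpleRefl n c)) := by
          simp only [mul_assoc]
          rw [← mul_assoc (simpleRefl n c) (simpleRefl n c), simpleRefl_mul_self, one_mul]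
        rw [hwx, key, ← mul_assoc (simpleRefl n c) (Equiv.swap a b) (simpleRefl n c), hconj]
      · have h1 : leC n (u * simpleRefl n c) x :=
          (IH (len n x) (by omega)).2.1 x u c rfl hc1 hc2 hux huup (by omega)
        refine (h1.tail ⟨a, b, hab, hwx, hlenxw⟩).tail ?_
        exact ⟨e, f, hef, by rw [hS], by omega⟩
  exact ⟨hD2, hLIFT, hUP⟩



variable {n : ℕ}

lemma bruhatLE_iff_leC {u w : Equiv.Perm (Fin n)} : bruhatLE n u w ↔ leC n u w := by
  constructor
  · rintro ⟨l, l', hred, hPl, hsub, hred', hPl'⟩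
    have := (big (len n w)).1 w l l' rfl hred hPl hsub
    rwa [hPl'] at this
  · intro h
    obtain ⟨l, hl, hlen, hPl⟩ := exists_reduced w
    obtain ⟨l', h1, h2, h3⟩ := chain_subword h l ⟨hl, by rw [hPl, ← hlen]⟩ hPl
    exact ⟨l, l', ⟨hl, by rw [hPl, ← hlen]⟩, hPl, h1, h2, h3⟩

lemma bruhatLE_trans {u v w : Equiv.Perm (Fin n)} (h1 : bruhatLE n u v)
    (h2 : bruhatLE n v w) : bruhatLE n u w :=
  bruhatLE_iff_leC.2 ((bruhatLE_iff_leC.1 h1).trans (bruhatLE_iff_leC.1 h2))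

lemma rel_up {y : Equiv.Perm (Fin n)} {c : ℕ} (hc1 : 1 ≤ c) (hc2 : c ≤ n - 1)
    (h : len n y < len n (y * simpleRefl n c)) : Rel n y (y * simpleRefl n c) := by
  obtain ⟨e, f, hef, hS⟩ := simpleRefl_ne hc1 hc2
  exact ⟨e, f, hef, by rw [hS], h⟩

lemma rel_down {x : Equiv.Perm (Fin n)} {c : ℕ} (hc1 : 1 ≤ c) (hc2 : c ≤ n - 1)
    (h : len n (x * simpleRefl n c) < len n x) : Rel n (x * simpleRefl n c) x := by
  obtain ⟨e, f, hef, hS⟩ := simpleRefl_ne hc1 hc2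
  exact ⟨e, f, hef, by rw [← hS, mul_assoc, simpleRefl_mul_self, mul_one], h⟩

lemma lift_right {x y : Equiv.Perm (Fin n)} (c : ℕ) (h : bruhatLE n x y) :
    bruhatLE n (x * simpleRefl n c)
      (if len n y < len n (y * simpleRefl n c) then y * simpleRefl n c else y) ∧
    bruhatLE n y
      (if len n y < len n (y * simpleRefl n c) then y * simpleRefl n c else y) := by
  by_cases hc : 1 ≤ c ∧ c ≤ n - 1
  case neg =>
    have hS : simpleRefl n c = 1 := by rw [simpleRefl, dif_neg hc]
    rw [hS, mul_one, mul_one, if_neg (lt_irrefl _)]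
    exact ⟨h, bruhatLE_refl y⟩
  case pos =>
    obtain ⟨hc1, hc2⟩ := hc
    have hchain := bruhatLE_iff_leC.1 h
    rcases len_mul_simple hc1 hc2 y with hyup | hydown
    · rw [if_pos (by omega)]
      have hy : bruhatLE n y (y * simpleRefl n c) :=
        bruhatLE_iff_leC.2 (Relation.ReflTransGen.single (rel_up hc1 hc2 (by omega)))
      refine ⟨?_, hy⟩
      rcases len_mul_simple hc1 hc2 x with hxup | hxdown
      · exact bruhatLE_iff_leC.2
          ((big (len n y)).2.2 y x c rfl hc1 hc2 hchain (by omega) (by omega))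
      · have hxs : bruhatLE n (x * simpleRefl n c) x :=
          bruhatLE_iff_leC.2 (Relation.ReflTransGen.single (rel_down hc1 hc2 (by omega)))
        exact bruhatLE_trans hxs (bruhatLE_trans h hy)
    · rw [if_neg (by omega)]
      refine ⟨?_, bruhatLE_refl y⟩
      rcases len_mul_simple hc1 hc2 x with hxup | hxdown
      · exact bruhatLE_iff_leC.2
          ((big (len n y)).2.1 y x c rfl hc1 hc2 hchain (by omega) (by omega))
      · have hxs : bruhatLE n (x * simpleRefl n c) x :=
          bruhatLE_iff_leC.2 (Relation.ReflTransGen.single (rel_down hc1 hc2 (by omega)))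
        exact bruhatLE_trans hxs h

lemma lift_left {x y : Equiv.Perm (Fin n)} (c : ℕ) (h : bruhatLE n x y) :
    bruhatLE n (simpleRefl n c * x)
      (if len n y < len n (simpleRefl n c * y) then simpleRefl n c * y else y) ∧
    bruhatLE n y
      (if len n y < len n (simpleRefl n c * y) then simpleRefl n c * y else y) := by
  have hinvlen : len n (y⁻¹ * simpleRefl n c) = len n (simpleRefl n c * y) := by
    rw [show y⁻¹ * simpleRefl n c = (simpleRefl n c * y)⁻¹ by
      rw [mul_inv_rev, simpleRefl_inv], len_inv]
  obtain ⟨h1, h2⟩ := lift_right c (bruhatLE_inv h)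
  by_cases hcond : len n y < len n (simpleRefl n c * y)
  · rw [if_pos hcond]
    rw [if_pos (by rw [hinvlen, len_inv]; exact hcond)] at h1 h2
    constructor
    · have := bruhatLE_inv h1
      simpa [mul_inv_rev, simpleRefl_inv] using this
    · have := bruhatLE_inv h2
      simpa [mul_inv_rev, simpleRefl_inv] using this
  · rw [if_neg hcond]
    rw [if_neg (by rw [hinvlen, len_inv]; exact hcond)] at h1 h2
    constructor
    · have := bruhatLE_inv h1
      simpa [mul_inv_rev, simpleRefl_inv] using this
    · exact bruhatLE_refl y
  
lemma bruhat_split_left {u σ : Equiv.Perm (Fin n)} {c : ℕ} {l : List ℕ}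
    (hred : IsReduced n (c :: l)) (hPl : wordProd n (c :: l) = σ) (h : bruhatLE n u σ) :
    bruhatLE n u (wordProd n l) ∨
      ∃ u', u = simpleRefl n c * u' ∧ bruhatLE n u' (wordProd n l) := by
  obtain ⟨l', hsub, hred', hP'⟩ := chain_subword (bruhatLE_iff_leC.1 h) (c :: l) hred hPl
  have hredl : IsReduced n l :=
    (isReduced_append (l := [c]) (m := l) (by simpa using hred)).2
  rcases List.sublist_cons_iff.1 hsub with h' | ⟨r, rfl, hr⟩
  · left
    exact ⟨l, l', hredl, rfl, h', hred', hP'⟩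
  · right
    have hredr : IsReduced n r :=
      (isReduced_append (l := [c]) (m := r) (by simpa using hred')).2
    exact ⟨wordProd n r, by rw [← hP', wordProd_cons], ⟨l, r, hredl, rfl, hr, hredr, rfl⟩⟩

lemma sigma_decomp {σ : Equiv.Perm (Fin n)} (h : len n σ ≠ 0) :
    ∃ c l, IsReduced n (c :: l) ∧ wordProd n (c :: l) = σ ∧
      len n (wordProd n l) = len n σ - 1 ∧ σ = simpleRefl n c * wordProd n l ∧
      bruhatLE n (wordProd n l) σ := by
  obtain ⟨l₀, hl₀, hlen₀, hP₀⟩ := exists_reduced σ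
  have : l₀ ≠ [] := by
    intro hnil
    rw [hnil] at hlen₀
    exact h (by rw [← hlen₀]; rfl)
  obtain ⟨c, l, rfl⟩ := List.exists_cons_of_ne_nil this
  have hred : IsReduced n (c :: l) := ⟨hl₀, by rw [hP₀, ← hlen₀]⟩
  have hredl : IsReduced n l :=
    (isReduced_append (l := [c]) (m := l) (by simpa using hred)).2
  refine ⟨c, l, hred, hP₀, ?_, by rw [← hP₀, wordProd_cons], ?_⟩
  · rw [hredl.2, ← hlen₀]
    simp
  · exact ⟨c :: l, l, hred, hP₀, (List.Sublist.refl l).cons c, hredl, rfl⟩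

lemma main_aux : ∀ k (σ w : Equiv.Perm (Fin n)), len n σ = k →
    ∃ g u₀, bruhatLE n u₀ σ ∧ g = u₀ * w ∧
      IsBruhatGreatest n {x | ∃ u v, bruhatLE n u σ ∧ bruhatLE n v w ∧ x = u * v} g := by
  intro k
  induction k using Nat.strong_induction_on with
  | _ k IH =>
  intro σ w hk
  rcases Nat.eq_zero_or_pos k with rfl | hkpos
  · have hσ : σ = 1 := eq_one_of_len_eq_zero hk
    subst hσ
    refine ⟨w, 1, bruhatLE_refl 1, (one_mul w).symm,
      ⟨1, w, bruhatLE_refl 1, bruhatLE_refl w, (one_mul w).symm⟩, ?_⟩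
    rintro x ⟨u, v, hu, hv, rfl⟩
    have hu1 : u = 1 := bruhatLE_le_one hu
    rw [hu1, one_mul]
    exact hv
  · obtain ⟨c, l, hredcl, hPcl, hlenl, hdecomp, hles⟩ := sigma_decomp (by rw [hk]; omega)
    set σ' := wordProd n l with hσ'
    obtain ⟨g', u₀, hu₀, hg', hg'mem, hg'max⟩ := IH (k - 1) (by omega) σ' w (by omega)
    have hcondσ : len n σ' < len n (simpleRefl n c * σ') := by
      rw [← hdecomp]
      omega
    by_cases hcond : len n g' < len n (simpleRefl n c * g')
    · refine ⟨simpleRefl n c * g', simpleRefl n c * u₀, ?_, by rw [hg', mul_assoc], ?_, ?_⟩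
      · have h1 := (lift_left c hu₀).1
        rw [if_pos hcondσ, ← hdecomp] at h1
        exact h1
      · refine ⟨simpleRefl n c * u₀, w, ?_, bruhatLE_refl w, by rw [hg', mul_assoc]⟩
        have h1 := (lift_left c hu₀).1
        rw [if_pos hcondσ, ← hdecomp] at h1
        exact h1
      · rintro x ⟨u, v, hu, hv, rfl⟩
        rcases bruhat_split_left hredcl hPcl hu with h' | ⟨u', rfl, hu'⟩
        · have h1 : bruhatLE n (u * v) g' := hg'max _ ⟨u, v, h', hv, rfl⟩
          have h2 := (lift_left c (bruhatLE_refl g')).2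
          rw [if_pos hcond] at h2
          exact bruhatLE_trans h1 h2
        · have h1 : bruhatLE n (u' * v) g' := hg'max _ ⟨u', v, hu', hv, rfl⟩
          have h2 := (lift_left c h1).1
          rw [if_pos hcond] at h2
          rw [mul_assoc]
          exact h2
    · refine ⟨g', u₀, bruhatLE_trans hu₀ hles, hg',
        ⟨u₀, w, bruhatLE_trans hu₀ hles, bruhatLE_refl w, hg'⟩, ?_⟩
      rintro x ⟨u, v, hu, hv, rfl⟩
      rcases bruhat_split_left hredcl hPcl hu with h' | ⟨u', rfl, hu'⟩
      · exact hg'max _ ⟨u, v, h', hv, rfl⟩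
      · have h1 : bruhatLE n (u' * v) g' := hg'max _ ⟨u', v, hu', hv, rfl⟩
        have h2 := (lift_left c h1).1
        rw [if_neg hcond] at h2
        rw [mul_assoc]
        exact h2

theorem isBruhatGreatest_interval_mul' (n : ℕ) (hn : 1 ≤ n) (σ w : Equiv.Perm (Fin n)) :
    IsBruhatGreatest n {x | ∃ u, bruhatLE n u σ ∧ x = u * w} (demMul n σ w) := by
  obtain ⟨g, u₀, hu₀, hgdef, hgreat⟩ := main_aux (len n σ) σ w rfl
  have hex : ∃ m, IsBruhatGreatest n
      {x | ∃ u v, bruhatLE n u σ ∧ bruhatLE n v w ∧ x = u * v} m := ⟨g, hgreat⟩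
  have hchoose : demMul n σ w = hex.choose := by rw [demMul, dif_pos hex]
  have hcs := hex.choose_spec
  have heq : hex.choose = g := bruhatLE_antisymm (hgreat.2 _ hcs.1) (hcs.2 _ hgreat.1)
  rw [hchoose, heq]
  constructor
  · exact ⟨u₀, hu₀, hgdef⟩
  · rintro x ⟨u, hu, rfl⟩
    exact hgreat.2 _ ⟨u, w, hu, bruhatLE_refl w, rfl⟩


/-- For `σ, w ∈ S_n`, the set `I(σ)w = {uw : u ≤ σ}` has a unique
maximal (greatest) element in the Bruhat order, namely the Demazure product `σ * w`. -/
theorem isBruhatGreatest_interval_mul (n : ℕ) (hn : 1 ≤ n) (σ w : Equiv.Perm (Fin n)) :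
    IsBruhatGreatest n {x | ∃ u, bruhatLE n u σ ∧ x = u * w} (demMul n σ w) :=
  isBruhatGreatest_interval_mul' n hn σ w

end KK
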